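/- Fix integers n, m, l, r, c ≥ 1, let E ∈ ℝ^{n×n}, F ∈ ℝ^{n×m}, G ∈ ℝ^{n×l}, H ∈ ℝ^{m×n}, and let (x̂, u, y) be a compensator trajectory. Then for every t ≥ 0 the input-output data matrix satisfies the rank bound rank(H_{r,c}(t)) ≤ min{ (m+l)r , c , n + lr }. (Upper-bound part of Lemma 1.) -/
import Mathlib


open Matrix

noncomputable section

namespace LQGPaper

variable {n m l : ℕ}

/-- Row block matrix `(E^{n-1}B, E^{n-2}B, …, B) ∈ ℝ^{n×nk}`. -/
def Frow {k : ℕ} (E : Matrix (Fin n) (Fin n) ℝ) (B : Matrix (Fin n) (Fin k) ℝ) :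
    Matrix (Fin n) (Fin n × Fin k) ℝ :=
  Matrix.of fun i q => (E ^ (n - 1 - (q.1 : ℕ)) * B) i q.2

/-- Strictly block-lower-triangular matrix (`M̃_u`/`M̃_y` style) whose `(i,j)` block
(0-indexed, blocks of size `n × k`) is `E^{i-j-1} B` for `i > j` and `0` otherwise. -/
def Mlow {k : ℕ} (E : Matrix (Fin n) (Fin n) ℝ) (B : Matrix (Fin n) (Fin k) ℝ) :
    Matrix (Fin n × Fin n) (Fin n × Fin k) ℝ :=
  Matrix.of fun p q =>
    if (q.1 : ℕ) < (p.1 : ℕ) then (E ^ ((p.1 : ℕ) - (q.1 : ℕ) - 1) * B) p.2 q.2 else 0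

/-- Strictly block-lower-triangular matrix (`M_u`/`M_y` style) whose `(i,j)` block
(0-indexed, blocks of size `m × k`) is `H E^{i-j-1} B` for `i > j` and `0` otherwise. -/
def MlowH {k : ℕ} (E : Matrix (Fin n) (Fin n) ℝ) (B : Matrix (Fin n) (Fin k) ℝ)
    (H : Matrix (Fin m) (Fin n) ℝ) :
    Matrix (Fin n × Fin m) (Fin n × Fin k) ℝ :=
  Matrix.of fun p q =>
    if (q.1 : ℕ) < (p.1 : ℕ) then (H * E ^ ((p.1 : ℕ) - (q.1 : ℕ) - 1) * B) p.2 q.2 else 0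

/-- The block column `F_x = (H; HE; …; HE^{n-1}) ∈ ℝ^{mn×n}`. -/
def Fx (E : Matrix (Fin n) (Fin n) ℝ) (H : Matrix (Fin m) (Fin n) ℝ) :
    Matrix (Fin n × Fin m) (Fin n) ℝ :=
  Matrix.of fun p j => (H * E ^ (p.1 : ℕ)) p.2 j

/-- The selection matrix `P_i = I_n ⊗ e_iᵀ ∈ ℝ^{n×nm}`. -/
def Pmat (n : ℕ) {m : ℕ} (i : Fin m) : Matrix (Fin n) (Fin n × Fin m) ℝ :=
  Matrix.of fun r q => if r = q.1 ∧ q.2 = i then 1 else 0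

/-- The Kronecker product `a ⊗ I_q ∈ ℝ^{q×nq}` of a row vector `a ∈ ℝ^{1×n}`
with the identity `I_q`. -/
def aKron (a : Fin n → ℝ) (q : ℕ) : Matrix (Fin q) (Fin n × Fin q) ℝ :=
  Matrix.of fun i p => if i = p.2 then a p.1 else 0

/-- The row vector `a ∈ ℝ^{1×n}` as a `1 × n` matrix. -/
def aRow (a : Fin n → ℝ) : Matrix (Fin 1) (Fin n) ℝ := Matrix.of fun _ k => a k

/-- The `i`-th row of `H` as a `1 × n` matrix. -/
def Hrow (H : Matrix (Fin m) (Fin n) ℝ) (i : Fin m) : Matrix (Fin 1) (Fin n) ℝ :=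
  Matrix.of fun _ j => H i j

/-- The estimation matrix
`L_est = [[F_u − (a⊗I_n)M̃_u , F_y − (a⊗I_n)M̃_y]; [a⊗I_m , 0]] ∈ ℝ^{(n+m)×(m+l)n}`. -/
def Lest (E : Matrix (Fin n) (Fin n) ℝ) (F : Matrix (Fin n) (Fin m) ℝ)
    (G : Matrix (Fin n) (Fin l) ℝ) (a : Fin n → ℝ) :
    Matrix (Fin n ⊕ Fin m) ((Fin n × Fin m) ⊕ (Fin n × Fin l)) ℝ :=
  Matrix.fromBlocks (Frow E F - aKron a n * Mlow E F) (Frow E G - aKron a n * Mlow E G)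
    (aKron a m) 0

/-- A compensator trajectory: `x̂(t+1) = E x̂(t) + F u(t) + G y(t+1)`, `u(t) = H x̂(t)`. -/
def IsCompTraj (E : Matrix (Fin n) (Fin n) ℝ) (F : Matrix (Fin n) (Fin m) ℝ)
    (G : Matrix (Fin n) (Fin l) ℝ) (H : Matrix (Fin m) (Fin n) ℝ)
    (xh : ℕ → Fin n → ℝ) (u : ℕ → Fin m → ℝ) (y : ℕ → Fin l → ℝ) : Prop :=
  (∀ t, xh (t + 1) = E.mulVec (xh t) + F.mulVec (u t) + G.mulVec (y (t + 1))) ∧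
    ∀ t, u t = H.mulVec (xh t)

/-- The stacked vector `(v(t); v(t+1); …; v(t+r-1))`. -/
def stack {k : ℕ} (v : ℕ → Fin k → ℝ) (r t : ℕ) : Fin r × Fin k → ℝ :=
  fun p => v (t + (p.1 : ℕ)) p.2

/-- The block column `F̄_x = (H; HĒ; …; HĒ^{r-1}) ∈ ℝ^{mr×n}`. -/
def ObsMat {n m : ℕ} (r : ℕ) (Eb : Matrix (Fin n) (Fin n) ℝ)
    (H : Matrix (Fin m) (Fin n) ℝ) : Matrix (Fin r × Fin m) (Fin n) ℝ :=
  Matrix.of fun p j => (H * Eb ^ (p.1 : ℕ)) p.2 j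

/-- `F̄_y ∈ ℝ^{mr×lr}`: block matrix whose `(i,j)` block (0-indexed, blocks `m × l`)
is `H Ē^{i-j-1} G` for `i > j` and `0` otherwise. -/
def ToepMat {n m l : ℕ} (r : ℕ) (Eb : Matrix (Fin n) (Fin n) ℝ)
    (G : Matrix (Fin n) (Fin l) ℝ) (H : Matrix (Fin m) (Fin n) ℝ) :
    Matrix (Fin r × Fin m) (Fin r × Fin l) ℝ :=
  Matrix.of fun p q =>
    if (q.1 : ℕ) < (p.1 : ℕ) then
      (H * Eb ^ ((p.1 : ℕ) - (q.1 : ℕ) - 1) * G) p.2 q.2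
    else 0

/-- The input-output data matrix `H_{r,c}(t)` whose `k`-th column is
`(U_r(t+k); Y_r(t+k+1))`. -/
def dataMat {m l : ℕ} (u : ℕ → Fin m → ℝ) (y : ℕ → Fin l → ℝ) (r c t : ℕ) :
    Matrix ((Fin r × Fin m) ⊕ (Fin r × Fin l)) (Fin c) ℝ :=
  Matrix.of fun i k =>
    Sum.elim (fun p : Fin r × Fin m => u (t + (k : ℕ) + (p.1 : ℕ)) p.2)
      (fun p : Fin r × Fin l => y (t + (k : ℕ) + 1 + (p.1 : ℕ)) p.2) i

/-- The matrix `N` whose `k`-th column is `(x̂(t+k); Y_r(t+k+1))`. -/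
def stateMat {n l : ℕ} (xh : ℕ → Fin n → ℝ) (y : ℕ → Fin l → ℝ) (r c t : ℕ) :
    Matrix (Fin n ⊕ (Fin r × Fin l)) (Fin c) ℝ :=
  Matrix.of fun i k =>
    Sum.elim (fun j : Fin n => xh (t + (k : ℕ)) j)
      (fun p : Fin r × Fin l => y (t + (k : ℕ) + 1 + (p.1 : ℕ)) p.2) i

lemma mulVec_finset_sum {α n k : ℕ} (A : Matrix (Fin n) (Fin k) ℝ) (s : Finset (Fin α))
    (v : Fin α → Fin k → ℝ) :
    A.mulVec (∑ j ∈ s, v j) = ∑ j ∈ s, A.mulVec (v j) := by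
  exact map_sum A.mulVecLin v s

lemma mulVec_range_sum {n k : ℕ} (A : Matrix (Fin n) (Fin k) ℝ) (r : ℕ)
    (v : ℕ → Fin k → ℝ) :
    A.mulVec (∑ j ∈ Finset.range r, v j) = ∑ j ∈ Finset.range r, A.mulVec (v j) := by
  exact map_sum A.mulVecLin v (Finset.range r)

lemma xh_formula {n m l : ℕ} (E : Matrix (Fin n) (Fin n) ℝ) (F : Matrix (Fin n) (Fin m) ℝ)
    (G : Matrix (Fin n) (Fin l) ℝ) (H : Matrix (Fin m) (Fin n) ℝ)
    (xh : ℕ → Fin n → ℝ) (u : ℕ → Fin m → ℝ) (y : ℕ → Fin l → ℝ)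
    (htraj : IsCompTraj E F G H xh u y) (s : ℕ) : ∀ i : ℕ,
    xh (s + i) = ((E + F * H) ^ i).mulVec (xh s) +
      ∑ j ∈ Finset.range i, ((E + F * H) ^ (i - 1 - j) * G).mulVec (y (s + j + 1)) := by
  obtain ⟨h1, h2⟩ := htraj
  intro i
  induction i with
  | zero => simp [Matrix.one_mulVec]
  | succ i ih =>
    have hstep : xh (s + i + 1) = (E + F * H).mulVec (xh (s + i)) + G.mulVec (y (s + i + 1)) := by
      rw [h1 (s + i), h2 (s + i), Matrix.mulVec_mulVec, Matrix.add_mulVec]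
    have hidx : s + (i + 1) = s + i + 1 := by omega
    rw [hidx, hstep, ih]
    rw [Matrix.mulVec_add, Matrix.mulVec_mulVec, ← pow_succ']
    rw [mulVec_range_sum, Finset.sum_range_succ, add_assoc]
    congr 1
    congr 1
    · apply Finset.sum_congr rfl
      intro j hj
      rw [Finset.mem_range] at hj
      have he : i + 1 - 1 - j = (i - 1 - j) + 1 := by omega
      rw [he, pow_succ']
      simp [Matrix.mulVec_mulVec, Matrix.mul_assoc]
    · simp

lemma sum_fin_ite_lt {r i : ℕ} (hi : i ≤ r) (g : ℕ → ℝ) :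
    ∑ a : Fin r, (if (a : ℕ) < i then g a else 0) = ∑ j ∈ Finset.range i, g j := by
  rw [Fin.sum_univ_eq_sum_range (fun a => if a < i then g a else 0) r, ← Finset.sum_filter]
  congr 1
  ext x
  simp only [Finset.mem_filter, Finset.mem_range]
  omega

lemma data_factorization {n m l : ℕ} (r c : ℕ)
    (E : Matrix (Fin n) (Fin n) ℝ) (F : Matrix (Fin n) (Fin m) ℝ)
    (G : Matrix (Fin n) (Fin l) ℝ) (H : Matrix (Fin m) (Fin n) ℝ)
    (xh : ℕ → Fin n → ℝ) (u : ℕ → Fin m → ℝ) (y : ℕ → Fin l → ℝ)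
    (htraj : IsCompTraj E F G H xh u y) (t : ℕ) :
    dataMat u y r c t =
      (Matrix.fromBlocks (ObsMat r (E + F * H) H) (ToepMat r (E + F * H) G H) 0 1) *
        stateMat xh y r c t := by
  ext i k
  rw [Matrix.mul_apply, Fintype.sum_sum_type]
  cases i with
  | inl p =>
    show u (t + (k : ℕ) + (p.1 : ℕ)) p.2 = _
    rw [htraj.2, xh_formula E F G H xh u y htraj (t + (k : ℕ)) (p.1 : ℕ),
      Matrix.mulVec_add, Matrix.mulVec_mulVec, mulVec_range_sum]
    simp only [Matrix.mulVec_mulVec]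
    simp only [Pi.add_apply, Finset.sum_apply]
    congr 1
    rw [Fintype.sum_prod_type]
    simp only [Matrix.fromBlocks_apply₁₂, ToepMat, stateMat, Matrix.of_apply, Sum.elim_inr,
      ite_mul, zero_mul]
    have hi : (p.1 : ℕ) ≤ r := p.1.isLt.le
    calc (∑ x ∈ Finset.range (p.1 : ℕ), ∑ b : Fin l,
            (H * ((E + F * H) ^ ((p.1 : ℕ) - 1 - x) * G)) p.2 b * y (t + (k : ℕ) + x + 1) b)
        = ∑ j ∈ Finset.range (p.1 : ℕ), ∑ b : Fin l,
            (H * (E + F * H) ^ ((p.1 : ℕ) - j - 1) * G) p.2 b *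
              y (t + (k : ℕ) + 1 + j) b := by
          apply Finset.sum_congr rfl
          intro j hj
          apply Finset.sum_congr rfl
          intro b _
          rw [show ((p.1 : ℕ) - 1 - j) = ((p.1 : ℕ) - j - 1) from by omega,
            show t + (k : ℕ) + j + 1 = t + (k : ℕ) + 1 + j from by omega,
            ← Matrix.mul_assoc]
      _ = ∑ a : Fin r, (if (a : ℕ) < (p.1 : ℕ) then ∑ b : Fin l,
            (H * (E + F * H) ^ ((p.1 : ℕ) - (a : ℕ) - 1) * G) p.2 b *
              y (t + (k : ℕ) + 1 + (a : ℕ)) b else 0) :=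
          (sum_fin_ite_lt hi _).symm
      _ = _ := by
          apply Finset.sum_congr rfl
          intro a _
          split <;> simp
  | inr p =>
    show y (t + (k : ℕ) + 1 + (p.1 : ℕ)) p.2 = _
    simp [stateMat, Matrix.one_apply]

/-- rank upper bound part of Lemma 1. -/
theorem data_matrix_rank_le (n m l r c : ℕ)
    (hn : 1 ≤ n) (hm : 1 ≤ m) (hl : 1 ≤ l) (hr : 1 ≤ r) (hc : 1 ≤ c)
    (E : Matrix (Fin n) (Fin n) ℝ) (F : Matrix (Fin n) (Fin m) ℝ)
    (G : Matrix (Fin n) (Fin l) ℝ) (H : Matrix (Fin m) (Fin n) ℝ)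
    (xh : ℕ → Fin n → ℝ) (u : ℕ → Fin m → ℝ) (y : ℕ → Fin l → ℝ)
    (htraj : IsCompTraj E F G H xh u y) (t : ℕ) :
    (dataMat u y r c t).rank ≤ min ((m + l) * r) (min c (n + l * r)) := by
  refine le_min ?_ (le_min ?_ ?_)
  · calc (dataMat u y r c t).rank ≤ Fintype.card ((Fin r × Fin m) ⊕ (Fin r × Fin l)) :=
        Matrix.rank_le_card_height _
      _ = (m + l) * r := by simp [Fintype.card_sum]; ring
  · calc (dataMat u y r c t).rank ≤ Fintype.card (Fin c) := Matrix.rank_le_card_width _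
      _ = c := by simp
  · rw [data_factorization r c E F G H xh u y htraj t]
    calc (_ * stateMat xh y r c t).rank ≤ (stateMat xh y r c t).rank :=
        Matrix.rank_mul_le_right _ _
      _ ≤ Fintype.card (Fin n ⊕ (Fin r × Fin l)) := Matrix.rank_le_card_height _
      _ = n + l * r := by simp [Fintype.card_sum]; ring

end LQGPaper
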